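/- Fix an integer g ≥ 2 and a rational number B. Suppose that for each n ≥ 1 we are given a symmetric function F_n : ℕ^n → ℚ such that F_1(2g−2) = B, and such that for every n ≥ 0, every k ≥ 1, and all natural numbers k_0, k_1, …, k_n with (k+1) + k_0 + k_1 + ⋯ + k_n = 2g + (n+2) − 3, one has F_{n+2}(k+1, k_0, k_1, …, k_n) = C(k_0+k+1, k_0)·F_{n+1}(k_0+k, k_1, …, k_n) + Σ_{i=1}^{n} C(k_i+k, k_i−1)·F_{n+1}(k_0, …, k_i+k, …, k_n), where the i-th summand is taken to be 0 when k_i = 0. Then for every n ≥ 1 and all natural numbers k_1, …, k_n with k_1 + ⋯ + k_n = 2g + n − 3, one has F_n(k_1, …, k_n) = ((2g+n−3)!/(k_1!⋯k_n!))·B. -/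

import Mathlib

open Finset Nat

/-- Fix an integer `g ≥ 2` and `B : ℚ`. Given symmetric functions
`F n : (Fin n → ℕ) → ℚ` with `F 1 (2g−2) = B` satisfying the degree-0 Virasoro
recursion, the unique solution is
`F n (k₁,…,kₙ) = ((2g+n−3)!/(k₁!⋯kₙ!))·B` whenever `k₁ + ⋯ + kₙ = 2g + n − 3`. -/
theorem virasoro_recursion_lambda_g_unique_solution
    (g : ℕ) (hg : 2 ≤ g) (B : ℚ)
    (F : (n : ℕ) → (Fin n → ℕ) → ℚ)
    (hsymm : ∀ (n : ℕ) (σ : Equiv.Perm (Fin n)) (v : Fin n → ℕ),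
      F n (v ∘ σ) = F n v)
    (hbase : F 1 (fun _ => 2 * g - 2) = B)
    (hrec : ∀ (n k k₀ : ℕ) (K : Fin n → ℕ), 1 ≤ k →
      (k + 1) + k₀ + ∑ i, K i = 2 * g + (n + 2) - 3 →
      F (n + 2) (Fin.cons (k + 1) (Fin.cons k₀ K)) =
        (Nat.choose (k₀ + k + 1) k₀ : ℚ) * F (n + 1) (Fin.cons (k₀ + k) K)
        + ∑ i, (if K i = 0 then 0 else (Nat.choose (K i + k) (K i - 1) : ℚ)) *
            F (n + 1) (Fin.cons k₀ (Function.update K i (K i + k)))) :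
    ∀ (n : ℕ) (K : Fin n → ℕ), 1 ≤ n → ∑ i, K i = 2 * g + n - 3 →
      F n K = ((2 * g + n - 3)! : ℚ) / (∏ i, (K i)!) * B := by
  intro n
  induction n with
  | zero => intro K h1 _; exact absurd h1 (by omega)
  | succ m ih =>
    rcases Nat.eq_zero_or_pos m with hm | hm
    · subst hm
      intro K _ hsum
      rw [Fin.sum_univ_one] at hsum
      have hK : K = fun _ => 2 * g - 2 := by
        funext i
        have h0 : i = 0 := Fin.eq_zero i
        rw [h0]; omega
      have h2 : 2 * g + 1 - 3 = 2 * g - 2 := by omega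
      have hne : (((2 * g - 2)!) : ℚ) ≠ 0 := by
        exact_mod_cast (Nat.factorial_pos _).ne'
      rw [hK, hbase, Fin.prod_univ_one, h2, div_self hne, one_mul]
    · intro K _ hsum
      obtain ⟨p, rfl⟩ : ∃ p, m = p + 1 := ⟨m - 1, by omega⟩
      -- find an entry ≥ 2
      have hex : ∃ j, 2 ≤ K j := by
        by_contra h
        push_neg at h
        have hle : ∑ i, K i ≤ ∑ _i : Fin (p + 2), 1 :=
          Finset.sum_le_sum (fun i _ => by have := h i; omega)
        simp at hle
        omega
      obtain ⟨j, hj⟩ := hex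
      set σ : Equiv.Perm (Fin (p + 2)) := Equiv.swap 0 j with hσ
      set v : Fin (p + 2) → ℕ := K ∘ σ with hv
      have hFv : F (p + 2) v = F (p + 2) K := hsymm _ σ K
      have hsumv : ∑ i, v i = ∑ i, K i := Equiv.sum_comp σ K
      have hprodv : ∏ i, ((v i)! : ℚ) = ∏ i, ((K i)! : ℚ) :=
        Equiv.prod_comp σ (fun x => ((K x)! : ℚ))
      have hv0 : v 0 = K j := by simp [hv, hσ]
      set k : ℕ := K j - 1 with hk
      set k₀ : ℕ := v 1 with hk0
      set K' : Fin p → ℕ := fun i => v i.succ.succ with hK'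
      have hvc : v = Fin.cons (k + 1) (Fin.cons k₀ K') := by
        funext i
        refine Fin.cases ?_ (fun i => ?_) i
        · rw [Fin.cons_zero, hv0]; omega
        · refine Fin.cases ?_ (fun i' => ?_) i
          · simp [hk0, hK']
          · simp [hK']
      have hsum' : (k + 1) + k₀ + ∑ i, K' i = 2 * g + (p + 2) - 3 := by
        have hs : ∑ i, v i = (k + 1) + (k₀ + ∑ i, K' i) := by
          rw [hvc, Fin.sum_cons, Fin.sum_cons]
        omega
      have hrec' := hrec p k k₀ K' (by omega) hsum'
      rw [← hvc] at hrec'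
      -- abbreviations
      set s : ℕ := 2 * g + (p + 2) - 3 with hsdef
      have hs1 : 2 * g + (p + 1) - 3 = s - 1 := by omega
      have hspos : 1 ≤ s := by omega
      set P : ℚ := ∏ i, ((K' i)! : ℚ) with hP
      have hPpos : 0 < P := Finset.prod_pos (fun i _ => by positivity)
      have fpos : ∀ a : ℕ, (0:ℚ) < (a ! : ℚ) := fun a => by
        exact_mod_cast Nat.factorial_pos a
      set c : ℚ := ((s - 1)! : ℚ) / (((k+1)! : ℚ) * ((k₀)! : ℚ) * P) * B with hc
      -- apply IH to the first term
      have h1 := ih (Fin.cons (k₀ + k) K') (by omega)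
        (by rw [Fin.sum_cons]; omega)
      rw [hs1] at h1
      push_cast at h1
      have hcons1 : ∏ i, (((Fin.cons (k₀ + k) K' : Fin (p+1) → ℕ) i)! : ℚ)
          = ((k₀ + k)! : ℚ) * P := by
        simp [Fin.prod_univ_succ, hP]
      -- first term value
      have hB : (Nat.choose (k₀ + k + 1) k₀ : ℚ) * F (p + 1) (Fin.cons (k₀ + k) K')
          = ((k₀ + k + 1 : ℕ) : ℚ) * c := by
        rw [h1, hcons1, hc]
        have key1 : Nat.choose (k₀ + k + 1) k₀ * k₀ ! * (k + 1)! = (k₀ + k + 1) * (k₀ + k)! := by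
          have h := Nat.choose_mul_factorial_mul_factorial
            (show k₀ ≤ k₀ + k + 1 by omega)
          rw [show k₀ + k + 1 - k₀ = k + 1 from by omega] at h
          rw [h]; exact Nat.factorial_succ _
        have key1' : (Nat.choose (k₀ + k + 1) k₀ : ℚ) * (k₀)! * ((k+1))!
            = ((k₀ + k + 1 : ℕ) : ℚ) * ((k₀ + k)!) := by exact_mod_cast key1
        have h2 : ((k₀ + k)! : ℚ) ≠ 0 := (fpos _).ne'
        have h3 : ((k+1)! : ℚ) ≠ 0 := (fpos _).ne'
        have h4 : ((k₀)! : ℚ) ≠ 0 := (fpos _).ne'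
        have h5 : P ≠ 0 := hPpos.ne'
        push_cast at key1'
        field_simp
        push_cast
        linear_combination B * key1'
      -- sum terms
      have hC : ∀ i : Fin p,
          (if K' i = 0 then 0 else (Nat.choose (K' i + k) (K' i - 1) : ℚ)) *
            F (p + 1) (Fin.cons k₀ (Function.update K' i (K' i + k)))
          = ((K' i : ℕ) : ℚ) * c := by
        intro i
        by_cases hzero : K' i = 0
        · simp [hzero]
        · rw [if_neg hzero]
          have hupd := ih (Fin.cons k₀ (Function.update K' i (K' i + k))) (by omega) ?side
          case side =>
            rw [Fin.sum_cons, Finset.sum_update_of_mem (mem_univ i), ← Finset.erase_eq]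
            have he : K' i + ∑ x ∈ univ.erase i, K' x = ∑ x, K' x :=
              Finset.add_sum_erase _ K' (mem_univ i)
            omega
          rw [hs1] at hupd
          push_cast at hupd
          rw [hupd]
          set m := K' i with hm
          have hprodupd : ∏ x, (((Fin.cons k₀ (Function.update K' i (m + k)) : Fin (p+1) → ℕ) x)! : ℚ)
              = ((k₀)! : ℚ) * (((m + k)! : ℚ) * ∏ x ∈ univ.erase i, ((K' x)! : ℚ)) := by
            rw [Fin.prod_univ_succ]
            simp only [Fin.cons_zero, Fin.cons_succ]
            congr 1
            rw [show (fun x : Fin p => ((Function.update K' i (m + k) x)! : ℚ))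
                = Function.update (fun x => ((K' x)! : ℚ)) i (((m+k)! : ℚ)) from ?_,
              Finset.prod_update_of_mem (mem_univ i), Finset.erase_eq]
            funext x
            by_cases hx : x = i
            · subst hx; simp
            · simp [Function.update_of_ne hx]
          have hPe : P = (m ! : ℚ) * ∏ x ∈ univ.erase i, ((K' x)! : ℚ) := by
            rw [hP, ← Finset.prod_erase_mul _ _ (mem_univ i)]; ring
          set E : ℚ := ∏ x ∈ univ.erase i, ((K' x)! : ℚ) with hE
          have hEpos : 0 < E := Finset.prod_pos (fun x _ => by positivity)
          have key2 : Nat.choose (m + k) (m - 1) * (m - 1)! * (k + 1)! = (m + k)! := by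
            have h := Nat.choose_mul_factorial_mul_factorial
              (show m - 1 ≤ m + k by omega)
            rw [show m + k - (m - 1) = k + 1 from by omega] at h
            exact h
          have key2' : (Nat.choose (m + k) (m - 1) : ℚ) * ((m-1)!) * ((k+1)!)
              = ((m + k)! : ℚ) := by exact_mod_cast key2
          have hmfact : (m ! : ℚ) = (m : ℚ) * ((m - 1)! : ℚ) := by
            have : m * (m-1)! = m ! := Nat.mul_factorial_pred (by omega)
            exact_mod_cast this.symm
          rw [hprodupd, hc, hPe]
          have h2 : ((m + k)! : ℚ) ≠ 0 := (fpos _).ne'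
          have h3 : ((k+1)! : ℚ) ≠ 0 := (fpos _).ne'
          have h4 : ((k₀)! : ℚ) ≠ 0 := (fpos _).ne'
          have h5 : E ≠ 0 := hEpos.ne'
          have h6 : ((m-1)! : ℚ) ≠ 0 := (fpos _).ne'
          field_simp
          rw [hmfact]
          linear_combination B * (m:ℚ) * key2'
      -- final assembly
      have hcast : ((s : ℕ) : ℚ) = ((k₀ + k + 1 : ℕ) : ℚ) + ((∑ i, K' i : ℕ) : ℚ) := by
        have : s = (k₀ + k + 1) + ∑ i, K' i := by omega
        exact_mod_cast this
      have hsfac : (s ! : ℚ) = (s : ℚ) * ((s - 1)! : ℚ) := by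
        have : s * (s - 1)! = s ! := Nat.mul_factorial_pred (by omega)
        exact_mod_cast this.symm
      have hprodK : ∏ i, ((K i)! : ℚ) = ((k+1)! : ℚ) * ((k₀)! : ℚ) * P := by
        rw [← hprodv, hvc]
        simp [Fin.prod_univ_succ, hP, mul_assoc]
      rw [← hFv, hrec', hB, Finset.sum_congr rfl (fun i _ => hC i), ← Finset.sum_mul]
      rw [Nat.cast_prod, hprodK, hsfac, hc]
      push_cast [hcast]
      ring
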